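/- Fix a commutative ring R and n : ℕ. Let C be the free R-module with basis {e_{a,b} | a, b ∈ Fin n, b ≤ a}, with coproduct Δ(e_{a,b}) = Σ_{k : b ≤ k ≤ a} e_{k,b} ⊗ e_{a,k}. For any fixed j₀ ≤ i₀ in Fin n, let S ⊆ C be the R-span of {e_{a,b} | j₀ ≤ b ≤ a ≤ i₀}. Then S is a subcoalgebra: for every basis element e_{a,b} with j₀ ≤ b ≤ a ≤ i₀, Δ(e_{a,b}) lies in the image of S ⊗[R] S in C ⊗[R] C; moreover, under the reindexing k ↦ k − j₀ identifying the interval [j₀, i₀] with Fin (i₀ − j₀ + 1), the restriction of Δ to S coincides with the analogous incidence coproduct on the free R-module over {(a,b) ∈ Fin (i₀−j₀+1)² | b ≤ a}. -/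

import Mathlib

open TensorProduct

/-- Pairs `(a, b)` with `b ≤ a` in `Fin n`: positions of lower triangular matrix entries. -/
def LTIdx (n : ℕ) := {p : Fin n × Fin n // p.2 ≤ p.1}

set_option maxHeartbeats 1000000 in
/-- For any fixed `j₀ ≤ i₀` in `Fin n`, the span `S` of the basis elements `e_{a,b}` with
`j₀ ≤ b ≤ a ≤ i₀` is a subcoalgebra of the incidence coalgebra of lower triangular matrix
entries: `Δ(e_{a,b})` lies in the image of `S ⊗ S`; moreover, under the reindexing
`k ↦ k - j₀` identifying `[j₀, i₀]` with `Fin (i₀ - j₀ + 1)`, the restriction of `Δ` to `S`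
coincides with the analogous incidence coproduct `Δ'` on the smaller matrix. -/
theorem lower_triangular_subcoalgebra
    (R : Type*) [CommRing R] (n : ℕ) (j₀ i₀ : Fin n) (hji : j₀ ≤ i₀)
    (Δ : (LTIdx n →₀ R) →ₗ[R] (LTIdx n →₀ R) ⊗[R] (LTIdx n →₀ R))
    (hΔ : ∀ s : LTIdx n,
      Δ (Finsupp.single s 1) =
        ∑ k ∈ (Finset.Icc s.1.2 s.1.1).attach,
          Finsupp.single (⟨(k.1, s.1.2), (Finset.mem_Icc.mp k.2).1⟩ : LTIdx n) (1 : R)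
            ⊗ₜ[R]
          Finsupp.single (⟨(s.1.1, k.1), (Finset.mem_Icc.mp k.2).2⟩ : LTIdx n) (1 : R))
    (Δ' : (LTIdx ((i₀ : ℕ) - (j₀ : ℕ) + 1) →₀ R) →ₗ[R]
        (LTIdx ((i₀ : ℕ) - (j₀ : ℕ) + 1) →₀ R) ⊗[R] (LTIdx ((i₀ : ℕ) - (j₀ : ℕ) + 1) →₀ R))
    (hΔ' : ∀ s : LTIdx ((i₀ : ℕ) - (j₀ : ℕ) + 1),
      Δ' (Finsupp.single s 1) =
        ∑ k ∈ (Finset.Icc s.1.2 s.1.1).attach,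
          Finsupp.single
            (⟨(k.1, s.1.2), (Finset.mem_Icc.mp k.2).1⟩ : LTIdx ((i₀ : ℕ) - (j₀ : ℕ) + 1)) (1 : R)
            ⊗ₜ[R]
          Finsupp.single
            (⟨(s.1.1, k.1), (Finset.mem_Icc.mp k.2).2⟩ : LTIdx ((i₀ : ℕ) - (j₀ : ℕ) + 1)) (1 : R))
    (φ : (LTIdx ((i₀ : ℕ) - (j₀ : ℕ) + 1) →₀ R) →ₗ[R] (LTIdx n →₀ R))
    (hφ : ∀ t : LTIdx ((i₀ : ℕ) - (j₀ : ℕ) + 1),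
      φ (Finsupp.single t 1) =
        Finsupp.single
          (⟨(⟨(t.1.1 : ℕ) + (j₀ : ℕ), by
                have h1 := t.1.1.isLt
                have h2 := i₀.isLt
                have h3 : (j₀ : ℕ) ≤ (i₀ : ℕ) := hji
                omega⟩,
             ⟨(t.1.2 : ℕ) + (j₀ : ℕ), by
                have h1 := t.1.2.isLt
                have h2 := i₀.isLt
                have h3 : (j₀ : ℕ) ≤ (i₀ : ℕ) := hji
                omega⟩),
            by
              rw [Fin.le_def]
              have h4 : (t.1.2 : ℕ) ≤ (t.1.1 : ℕ) := t.2
              simpa using Nat.add_le_add_right h4 (j₀ : ℕ)⟩ : LTIdx n) (1 : R)) :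
    (∀ s : LTIdx n, j₀ ≤ s.1.2 → s.1.1 ≤ i₀ →
      Δ (Finsupp.single s 1) ∈ LinearMap.range (TensorProduct.mapIncl
        (Submodule.span R
          {x : LTIdx n →₀ R | ∃ s' : LTIdx n,
            (j₀ ≤ s'.1.2 ∧ s'.1.1 ≤ i₀) ∧ x = Finsupp.single s' 1})
        (Submodule.span R
          {x : LTIdx n →₀ R | ∃ s' : LTIdx n,
            (j₀ ≤ s'.1.2 ∧ s'.1.1 ≤ i₀) ∧ x = Finsupp.single s' 1}))) ∧
    Δ ∘ₗ φ = (TensorProduct.map φ φ) ∘ₗ Δ' := by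
  have hj : (j₀ : ℕ) ≤ (i₀ : ℕ) := hji
  set S : Submodule R (LTIdx n →₀ R) := Submodule.span R
    {x : LTIdx n →₀ R | ∃ s' : LTIdx n,
      (j₀ ≤ s'.1.2 ∧ s'.1.1 ≤ i₀) ∧ x = Finsupp.single s' 1} with hS
  constructor
  · intro s hb ha
    rw [hΔ s]
    apply Submodule.sum_mem
    intro k _
    have hk1 := (Finset.mem_Icc.mp k.2).1
    have hk2 := (Finset.mem_Icc.mp k.2).2
    exact ⟨(⟨_, hS ▸ Submodule.subset_span
        ⟨(⟨(k.1, s.1.2), hk1⟩ : LTIdx n), ⟨hb, le_trans hk2 ha⟩, rfl⟩⟩ : S) ⊗ₜ[R]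
      (⟨_, hS ▸ Submodule.subset_span
        ⟨(⟨(s.1.1, k.1), hk2⟩ : LTIdx n), ⟨le_trans hb hk1, ha⟩, rfl⟩⟩ : S), rfl⟩
  · apply Finsupp.lhom_ext'
    intro t
    apply LinearMap.ext_ring
    simp only [LinearMap.coe_comp, Function.comp_apply, Finsupp.lsingle_apply]
    rw [hφ t]
    refine (hΔ _).trans ?_
    conv_rhs => rw [hΔ' t]
    erw [map_sum]
    simp only [map_sum, TensorProduct.map_tmul, hφ]
    conv_rhs => arg 2; ext k; erw [TensorProduct.map_tmul, hφ, hφ]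
    obtain ⟨⟨a, b⟩, hba⟩ := t
    have hba' : (b : ℕ) ≤ (a : ℕ) := hba
    have hin := i₀.isLt
    have han := a.isLt
    have hbn := b.isLt
    have ha' : (a : ℕ) + (j₀ : ℕ) < n := by omega
    have hb' : (b : ℕ) + (j₀ : ℕ) < n := by omega
    refine Finset.sum_nbij' (M := (LTIdx n →₀ R) ⊗[R] (LTIdx n →₀ R))
      (i := fun (k : {x : Fin n // x ∈ Finset.Icc (⟨(b : ℕ) + (j₀ : ℕ), hb'⟩ : Fin n)
          (⟨(a : ℕ) + (j₀ : ℕ), ha'⟩ : Fin n)}) =>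
        (⟨⟨(k.1 : ℕ) - (j₀ : ℕ), by
            have h2 := (Finset.mem_Icc.mp k.2).2
            rw [Fin.le_def] at h2
            simp only at h2
            omega⟩, by
          have h1 := (Finset.mem_Icc.mp k.2).1
          have h2 := (Finset.mem_Icc.mp k.2).2
          rw [Fin.le_def] at h1 h2
          simp only at h1 h2
          refine Finset.mem_Icc.mpr ⟨?_, ?_⟩ <;> rw [Fin.le_def] <;> simp only <;> omega⟩ :
        {x : Fin ((i₀ : ℕ) - (j₀ : ℕ) + 1) // x ∈ Finset.Icc b a}))
      (j := fun (k : {x : Fin ((i₀ : ℕ) - (j₀ : ℕ) + 1) // x ∈ Finset.Icc b a}) =>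
        (⟨⟨(k.1 : ℕ) + (j₀ : ℕ), by
            have h2 := (Finset.mem_Icc.mp k.2).2
            rw [Fin.le_def] at h2
            omega⟩, by
          have h1 := (Finset.mem_Icc.mp k.2).1
          have h2 := (Finset.mem_Icc.mp k.2).2
          rw [Fin.le_def] at h1 h2
          refine Finset.mem_Icc.mpr ⟨?_, ?_⟩ <;> rw [Fin.le_def] <;> simp only <;> omega⟩ :
        {x : Fin n // x ∈ Finset.Icc (⟨(b : ℕ) + (j₀ : ℕ), hb'⟩ : Fin n)
          (⟨(a : ℕ) + (j₀ : ℕ), ha'⟩ : Fin n)}))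
      (fun _ _ => Finset.mem_attach _ _) (fun _ _ => Finset.mem_attach _ _)
      ?_ ?_ ?_
    · intro k _
      have h1 := (Finset.mem_Icc.mp k.2).1
      rw [Fin.le_def] at h1
      simp only at h1
      exact Subtype.ext (Fin.ext (by simp only; omega))
    · intro k _
      exact Subtype.ext (Fin.ext (by simp only; omega))
    · intro k _
      have h1 := (Finset.mem_Icc.mp k.2).1
      rw [Fin.le_def] at h1
      simp only at h1
      congr 2 <;> apply Subtype.ext <;> apply Prod.ext <;> apply Fin.ext <;> simp <;> omega
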